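/- arXiv:2001.06710 — 3 statements merged into one kernel-verified Lean document; each statement's English description precedes it below -/
import Mathlib

section
/- Let ι be a finite type, let (E_i)_{i∈ι} and F be normed vector spaces over ℂ, let M be a continuous multilinear map from Π_{i∈ι} E_i to F, let N be a nonnegative integer, t₀ ∈ ℂ, and for each i ∈ ι let f_i : ℂ → E_i be N times continuously differentiable on a neighborhood of t₀. Then the function t ↦ M((f_i(t))_{i∈ι}) is N times differentiable at t₀ and its N-th iterated derivative at t₀ equals the sum, over all families (n_i)_{i∈ι} of nonnegative integers with Σ_{i∈ι} n_i = N, of (N!/Π_{i∈ι} n_i!) • M((iteratedDeriv^{n_i} f_i (t₀))_{i∈ι}). -/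
open Finset Function Filter

section auxlemmas

/-- Pascal-type recurrence for the multinomial coefficient. -/
lemma multinomial_pascal_aux {ι : Type*} [Fintype ι] [DecidableEq ι] (n : ι → ℕ) {N : ℕ}
    (h : ∑ i, n i = N + 1) :
    Nat.multinomial Finset.univ n =
      ∑ i ∈ Finset.univ.filter (fun i => n i ≠ 0),
        Nat.multinomial Finset.univ (Function.update n i (n i - 1)) := by
  have hpos : 0 < ∏ i, (n i).factorial := Finset.prod_pos fun i _ => Nat.factorial_pos _
  refine Nat.eq_of_mul_eq_mul_left hpos ?_
  rw [Nat.multinomial_spec, h, Finset.mul_sum]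
  have key : ∀ i ∈ Finset.univ.filter (fun i => n i ≠ 0),
      (∏ j, (n j).factorial) * Nat.multinomial Finset.univ (Function.update n i (n i - 1))
        = n i * N.factorial := by
    intro i hi
    simp only [Finset.mem_filter, Finset.mem_univ, true_and] at hi
    have hni : 1 ≤ n i := Nat.one_le_iff_ne_zero.2 hi
    have h1 : (fun j => ((Function.update n i (n i - 1)) j).factorial)
        = Function.update (fun j => (n j).factorial) i (n i - 1).factorial :=
      funext fun j => Function.apply_update (fun _ k => k.factorial) n i _ j
    have h2 : ∏ j, ((Function.update n i (n i - 1)) j).factorial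
        = (n i - 1).factorial * ∏ j ∈ Finset.univ \ {i}, (n j).factorial := by
      rw [h1]
      exact Finset.prod_update_of_mem (Finset.mem_univ i)
        (fun j => (n j).factorial) ((n i - 1).factorial)
    have h3 : ∏ j, (n j).factorial
        = (n i).factorial * ∏ j ∈ Finset.univ \ {i}, (n j).factorial := by
      rw [← Finset.erase_eq]
      exact (Finset.mul_prod_erase Finset.univ (fun j => (n j).factorial)
        (Finset.mem_univ i)).symm
    have h4 : (n i).factorial = n i * (n i - 1).factorial := by
      obtain ⟨k, hk⟩ : ∃ k, n i = k + 1 := ⟨n i - 1, by omega⟩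
      rw [hk]
      simp [Nat.factorial_succ]
    have hsum : ∑ j, (Function.update n i (n i - 1)) j = N := by
      rw [Finset.sum_update_of_mem (Finset.mem_univ i), ← Finset.erase_eq]
      have h5 := Finset.add_sum_erase Finset.univ n (Finset.mem_univ i)
      omega
    calc (∏ j, (n j).factorial) * Nat.multinomial Finset.univ (Function.update n i (n i - 1))
        = n i * ((∏ j, ((Function.update n i (n i - 1)) j).factorial)
            * Nat.multinomial Finset.univ (Function.update n i (n i - 1))) := by
          rw [h2, h3, h4]; ring
      _ = n i * N.factorial := by rw [Nat.multinomial_spec, hsum]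
  rw [Finset.sum_congr rfl key, ← Finset.sum_mul, Finset.sum_filter_ne_zero, h,
    Nat.factorial_succ]

/-- Iterated derivative of a finite sum of functions that are `C^N` at a point. -/
lemma iteratedDeriv_sum_at {F : Type*} [NormedAddCommGroup F] [NormedSpace ℂ F]
    {κ : Type*} (s : Finset κ) (g : κ → ℂ → F) (N : ℕ) (t₀ : ℂ)
    (h : ∀ i ∈ s, ContDiffAt ℂ N (g i) t₀) :
    iteratedDeriv N (fun t => ∑ i ∈ s, g i t) t₀ = ∑ i ∈ s, iteratedDeriv N (g i) t₀ := by
  classical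
  have hU : ∃ u ∈ nhds t₀, ∀ i ∈ s, ContDiffOn ℂ N (g i) u := by
    choose u hu hcd using fun (i : s) => ((h i i.2).contDiffOn le_rfl (by simp))
    refine ⟨⋂ i : s, u i, Filter.iInter_mem.2 hu, fun i hi => ?_⟩
    exact (hcd ⟨i, hi⟩).mono (Set.iInter_subset _ (⟨i, hi⟩ : s))
  obtain ⟨u, hu, hcd⟩ := hU
  obtain ⟨V, hVU, hVopen, ht₀V⟩ := mem_nhds_iff.mp hu
  have hcdV : ∀ i ∈ s, ContDiffOn ℂ N (g i) V := fun i hi => (hcd i hi).mono hVU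
  calc iteratedDeriv N (fun t => ∑ i ∈ s, g i t) t₀
      = iteratedFDeriv ℂ N (fun t => ∑ i ∈ s, g i t) t₀ (fun _ => 1) :=
        iteratedDeriv_eq_iteratedFDeriv
    _ = iteratedFDerivWithin ℂ N (fun t => ∑ i ∈ s, g i t) V t₀ (fun _ => 1) := by
        rw [iteratedFDerivWithin_of_isOpen N hVopen ht₀V]
    _ = (∑ i ∈ s, iteratedFDerivWithin ℂ N (g i) V t₀) (fun _ => 1) := by
        have := iteratedFDerivWithin_sum_apply (f := g) hVopen.uniqueDiffOn ht₀V
          (fun i hi => hcdV i hi t₀ ht₀V)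
        rw [Finset.sum_fn] at this; rw [this]
    _ = ∑ i ∈ s, iteratedFDerivWithin ℂ N (g i) V t₀ (fun _ => 1) := by
        rw [ContinuousMultilinearMap.sum_apply]
    _ = ∑ i ∈ s, iteratedDeriv N (g i) t₀ := by
        refine Finset.sum_congr rfl fun i hi => ?_
        rw [iteratedFDerivWithin_of_isOpen N hVopen ht₀V, ← iteratedDeriv_eq_iteratedFDeriv]

/-- Key induction: generalized Leibniz rule with `Nat.multinomial` coefficients. -/
lemma iteratedDeriv_cmm_key
    {ι : Type*} [Fintype ι] [DecidableEq ι]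
    {E : ι → Type*} [∀ i, NormedAddCommGroup (E i)] [∀ i, NormedSpace ℂ (E i)]
    {F : Type*} [NormedAddCommGroup F] [NormedSpace ℂ F]
    (M : ContinuousMultilinearMap ℂ E F) :
    ∀ (N : ℕ) (f : ∀ i, ℂ → E i) (t₀ : ℂ), (∀ i, ContDiffAt ℂ N (f i) t₀) →
      iteratedDeriv N (fun t => M (fun i => f i t)) t₀ =
        ∑ n ∈ (Fintype.piFinset fun _ : ι => Finset.range (N + 1)).filter
            (fun n => ∑ i : ι, n i = N),
          Nat.multinomial Finset.univ n • M (fun i => iteratedDeriv (n i) (f i) t₀) := by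
  intro N
  induction N with
  | zero =>
    intro f t₀ hf
    have hset : (Fintype.piFinset fun _ : ι => Finset.range (0 + 1)).filter
        (fun n => ∑ i : ι, n i = 0) = {fun _ => 0} := by
      ext n
      simp only [Finset.mem_filter, Fintype.mem_piFinset, Finset.mem_range,
        Finset.mem_singleton, funext_iff, Nat.lt_succ_iff, Nat.le_zero]
      constructor
      · rintro ⟨h1, h2⟩ i
        have h3 : ∀ j ∈ Finset.univ, n j = 0 := (Finset.sum_eq_zero_iff).1 h2
        exact h3 i (Finset.mem_univ i)
      · intro h1
        exact ⟨fun i => h1 i, Finset.sum_eq_zero fun i _ => h1 i⟩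
    rw [hset, Finset.sum_singleton]
    simp [iteratedDeriv_zero, Nat.multinomial]
  | succ N IH =>
    intro f t₀ hf
    have hf' : ∀ i, ContDiffAt ℂ N (f i) t₀ := fun i =>
      (hf i).of_le (by exact_mod_cast Nat.le_succ N)
    have hfderiv : ∀ i, ContDiffAt ℂ N (deriv (f i)) t₀ := by
      intro i
      have h1 : ContDiffAt ℂ N (fderiv ℂ (f i)) t₀ :=
        (hf i).fderiv_right (by exact_mod_cast le_refl (N + 1))
      have h2 : ContDiffAt ℂ N (fun t => fderiv ℂ (f i) t 1) t₀ := h1.clm_apply contDiffAt_const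
      have h3 : deriv (f i) = fun t => fderiv ℂ (f i) t 1 := funext fun t => (fderiv_apply_one_eq_deriv).symm
      rw [h3]; exact h2
    have hFam : ∀ i j, ContDiffAt ℂ N (Function.update f i (deriv (f i)) j) t₀ := by
      intro i j
      rcases eq_or_ne j i with rfl | hji
      · simpa [Function.update_self] using hfderiv j
      · simpa [Function.update_of_ne hji] using hf' j
    set G : ι → ℂ → F := fun i t => M (fun j => Function.update f i (deriv (f i)) j t) with hGdef
    have hG : ∀ i, ContDiffAt ℂ N (G i) t₀ := fun i =>
      ContDiffAt.comp t₀ (ContinuousMultilinearMap.contDiff M).contDiffAt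
        (contDiffAt_pi.2 (hFam i))
    have heq : deriv (fun t => M (fun i => f i t)) =ᶠ[nhds t₀] fun t => ∑ i : ι, G i t := by
      have hev : ∀ᶠ t in nhds t₀, ∀ i, ContDiffAt ℂ (N + 1 : ℕ) (f i) t :=
        Filter.eventually_all.2 fun i => (hf i).eventually (by simp)
      filter_upwards [hev] with t ht
      have hd : ∀ i, HasDerivAt (f i) (deriv (f i) t) t := fun i =>
        ((ht i).differentiableAt (by simp)).hasDerivAt
      have hM : HasDerivAt (fun t => M (fun i => f i t))
          (M.linearDeriv (fun i => f i t) (fun i => deriv (f i) t)) t :=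
        (M.hasFDerivAt (fun i => f i t)).comp_hasDerivAt t (hasDerivAt_pi.2 hd)
      rw [hM.deriv, ContinuousMultilinearMap.linearDeriv_apply]
      refine Finset.sum_congr rfl fun i _ => ?_
      congr 1
      funext j
      exact (Function.apply_update (fun j (g : ℂ → E j) => g t) f i (deriv (f i)) j).symm
    rw [iteratedDeriv_succ', Filter.EventuallyEq.iteratedDeriv_eq N heq,
      iteratedDeriv_sum_at Finset.univ G N t₀ (fun i _ => hG i)]
    have hIH : ∀ i : ι, iteratedDeriv N (G i) t₀ =
        ∑ m ∈ (Fintype.piFinset fun _ : ι => Finset.range (N + 1)).filter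
            (fun m => ∑ j : ι, m j = N),
          Nat.multinomial Finset.univ m •
            M (fun j => iteratedDeriv (Function.update m i (m i + 1) j) (f j) t₀) := by
      intro i
      rw [hGdef]
      rw [IH (Function.update f i (deriv (f i))) t₀ (hFam i)]
      refine Finset.sum_congr rfl fun m hm => ?_
      congr 2
      funext j
      rcases eq_or_ne j i with rfl | hji
      · simp only [Function.update_self]
        rw [iteratedDeriv_succ']
      · simp [Function.update_of_ne hji]
    simp only [hIH]
    -- now transform the RHS
    have hR : ∀ n ∈ (Fintype.piFinset fun _ : ι => Finset.range (N + 2)).filter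
        (fun n => ∑ i : ι, n i = N + 1),
        Nat.multinomial Finset.univ n • M (fun i => iteratedDeriv (n i) (f i) t₀)
          = ∑ i ∈ Finset.univ.filter (fun i => n i ≠ 0),
              Nat.multinomial Finset.univ (Function.update n i (n i - 1)) •
                M (fun i => iteratedDeriv (n i) (f i) t₀) := by
      intro n hn
      simp only [Finset.mem_filter] at hn
      rw [multinomial_pascal_aux n hn.2, Finset.sum_smul]
    rw [Finset.sum_congr rfl hR]
    rw [Finset.sum_comm' (s := (Fintype.piFinset fun _ : ι => Finset.range (N + 2)).filter
        (fun n => ∑ i : ι, n i = N + 1))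
        (t := fun n => Finset.univ.filter (fun i => n i ≠ 0))
        (t' := Finset.univ)
        (s' := fun i => (Fintype.piFinset fun _ : ι => Finset.range (N + 2)).filter
          (fun n => (∑ i : ι, n i = N + 1) ∧ n i ≠ 0)) ?_]
    · refine Finset.sum_congr rfl fun i _ => ?_
      refine Finset.sum_nbij' (fun m => Function.update m i (m i + 1))
        (fun n => Function.update n i (n i - 1)) ?_ ?_ ?_ ?_ ?_
      · intro m hm
        simp only [Finset.mem_filter, Fintype.mem_piFinset, Finset.mem_range] at hm ⊢
        obtain ⟨hmem, hsum⟩ := hm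
        have hsum' : ∑ j, Function.update m i (m i + 1) j = N + 1 := by
          rw [Finset.sum_update_of_mem (Finset.mem_univ i), ← Finset.erase_eq]
          have h5 := Finset.add_sum_erase Finset.univ m (Finset.mem_univ i)
          omega
        refine ⟨fun j => ?_, hsum', by simp⟩
        rcases eq_or_ne j i with rfl | hji
        · simp only [Function.update_self]; have := hmem j; omega
        · simp only [Function.update_of_ne hji]; have := hmem j; omega
      · intro n hn
        simp only [Finset.mem_filter, Fintype.mem_piFinset, Finset.mem_range] at hn ⊢
        obtain ⟨hmem, hsum, hne⟩ := hn
        have hle : ∀ j, j ≠ i → n j ≤ N := by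
          intro j hji
          have h6 : n j + n i ≤ ∑ k, n k := by
            have h7 : n i ≤ ∑ k ∈ Finset.univ.erase j, n k :=
              Finset.single_le_sum (fun _ _ => Nat.zero_le _)
                (Finset.mem_erase.2 ⟨(Ne.symm hji), Finset.mem_univ i⟩)
            have h8 := Finset.add_sum_erase Finset.univ n (Finset.mem_univ j)
            omega
          omega
        have hsum' : ∑ j, Function.update n i (n i - 1) j = N := by
          rw [Finset.sum_update_of_mem (Finset.mem_univ i), ← Finset.erase_eq]
          have h5 := Finset.add_sum_erase Finset.univ n (Finset.mem_univ i)
          omega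
        refine ⟨fun j => ?_, hsum'⟩
        rcases eq_or_ne j i with rfl | hji
        · simp only [Function.update_self]; have := hmem j; omega
        · simp only [Function.update_of_ne hji]; have := hle j hji; omega
      · intro m hm
        funext j
        rcases eq_or_ne j i with rfl | hji
        · simp only [Function.update_idem, Function.update_self]; omega
        · simp [Function.update_of_ne hji]
      · intro n hn
        simp only [Finset.mem_filter] at hn
        have hne : n i ≠ 0 := hn.2.2
        funext j
        rcases eq_or_ne j i with rfl | hji
        · simp only [Function.update_idem, Function.update_self]
          omega
        · simp [Function.update_of_ne hji]
      · intro m hm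
        have hcoef : Function.update (Function.update m i (m i + 1)) i
            (Function.update m i (m i + 1) i - 1) = m := by
          funext j
          rcases eq_or_ne j i with rfl | hji
          · simp only [Function.update_idem, Function.update_self]; omega
          · simp [Function.update_of_ne hji]
        rw [hcoef]
    · intro n i
      simp only [Finset.mem_filter, Finset.mem_univ, true_and, and_assoc]
      tauto

end auxlemmas

/-- generalized Leibniz rule for continuous multilinear maps.  If each
`f i : ℂ → E i` is `N` times continuously differentiable near `t₀` and `M` is a continuous
multilinear map, then `t ↦ M (fun i => f i t)` is `N` times differentiable at `t₀`, with
`N`-th iterated derivative the multinomial sum of `M` applied to iterated derivatives. -/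
theorem iteratedDeriv_continuousMultilinearMap_comp
    {ι : Type*} [Fintype ι] [DecidableEq ι]
    {E : ι → Type*} [∀ i, NormedAddCommGroup (E i)] [∀ i, NormedSpace ℂ (E i)]
    {F : Type*} [NormedAddCommGroup F] [NormedSpace ℂ F]
    (M : ContinuousMultilinearMap ℂ E F)
    (N : ℕ) (t₀ : ℂ) (f : ∀ i, ℂ → E i)
    (hf : ∀ i, ContDiffAt ℂ N (f i) t₀) :
    ContDiffAt ℂ N (fun t => M (fun i => f i t)) t₀ ∧
      iteratedDeriv N (fun t => M (fun i => f i t)) t₀ =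
        ∑ n ∈ (Fintype.piFinset fun _ : ι => Finset.range (N + 1)).filter
            (fun n => ∑ i : ι, n i = N),
          (N.factorial / ∏ i : ι, (n i).factorial) •
            M (fun i => iteratedDeriv (n i) (f i) t₀) := by
  constructor
  · exact ContDiffAt.comp t₀ (ContinuousMultilinearMap.contDiff M).contDiffAt
      (contDiffAt_pi.2 hf)
  · rw [iteratedDeriv_cmm_key M N f t₀ hf]
    refine Finset.sum_congr rfl fun n hn => ?_
    simp only [Finset.mem_filter] at hn
    congr 1
    rw [Nat.multinomial, hn.2]
end

section
/- Let φ : ℂ → ℂ be analytic on a neighborhood of 0 with φ(0) = 0 and φ'(0) ≠ 0 (a simple zero at 0). Then there exist r > 0 and a function ζ : ℂ → ℂ analytic on the open ball of radius r about 0, with ζ(0) = 0 and ζ'(0) ≠ 0, such that φ(z) = (9/4) · ζ(z) · (ζ'(z))² for all |z| < r. -/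
open scoped Topology
open Filter

/-- Existence of analytic n-th roots of a nonvanishing analytic function. -/
lemma exists_analytic_root (n : ℕ) (hn : 0 < n) (h : ℂ → ℂ)
    (hh : AnalyticAt ℂ h 0) (h0 : h 0 ≠ 0) :
    ∃ s : ℂ → ℂ, AnalyticAt ℂ s 0 ∧ s 0 ≠ 0 ∧ ∀ᶠ z in 𝓝 (0 : ℂ), s z ^ n = h z := by
  obtain ⟨u, hu⟩ := IsAlgClosed.exists_pow_nat_eq (h 0) hn
  refine ⟨fun z => u * Complex.exp ((n : ℂ)⁻¹ * Complex.log (h z / h 0)), ?_, ?_, ?_⟩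
  · exact analyticAt_const.mul
      ((analyticAt_const.mul ((hh.div analyticAt_const h0).clog
        (by simp [div_self h0, Complex.one_mem_slitPlane]))).cexp)
  · have : u ≠ 0 := by
      intro hu0; rw [hu0] at hu; simp [zero_pow hn.ne'] at hu; exact h0 hu.symm
    simpa [div_self h0, Complex.log_one] using this
  · have hev : ∀ᶠ z in 𝓝 (0 : ℂ), h z ≠ 0 := hh.continuousAt.eventually_ne h0
    filter_upwards [hev] with z hz
    have hne : h z / h 0 ≠ 0 := div_ne_zero hz h0
    rw [mul_pow, hu, ← Complex.exp_nat_mul]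
    rw [show (n : ℂ) * ((n : ℂ)⁻¹ * Complex.log (h z / h 0)) = Complex.log (h z / h 0) by
      rw [← mul_assoc, mul_inv_cancel₀ (by exact_mod_cast hn.ne' : (n : ℂ) ≠ 0), one_mul]]
    rw [Complex.exp_log hne]
    field_simp

/-- Solving the linear ODE `(3/2) q + z q' = s` with analytic data. -/
lemma exists_analytic_ode_solution (s : ℂ → ℂ) (hs : AnalyticAt ℂ s 0) :
    ∃ q : ℂ → ℂ, AnalyticAt ℂ q 0 ∧ q 0 = (2 / 3 : ℂ) * s 0 ∧
      ∀ᶠ z in 𝓝 (0 : ℂ), (3 / 2 : ℂ) * q z + z * deriv q z = s z := by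
  obtain ⟨σ, hσat⟩ := hs
  obtain ⟨r, hσ⟩ := hσat
  set a : ℕ → ℂ := fun n => σ.coeff n / ((n : ℂ) + 3 / 2) with ha
  have hden : ∀ n : ℕ, ((n : ℂ) + 3 / 2) ≠ 0 := by
    intro n
    have : ((n : ℂ) + 3 / 2) = (((n : ℝ) + 3 / 2 : ℝ) : ℂ) := by push_cast; ring
    rw [this]
    rw [Complex.ofReal_ne_zero]
    positivity
  have hdenabs : ∀ n : ℕ, (1 : ℝ) ≤ ‖((n : ℂ) + 3 / 2)‖ := by
    intro n
    have : ((n : ℂ) + 3 / 2) = (((n : ℝ) + 3 / 2 : ℝ) : ℂ) := by push_cast; ring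
    rw [this, Complex.norm_real, Real.norm_eq_abs, abs_of_pos (by positivity)]
    have : (0 : ℝ) ≤ (n : ℝ) := Nat.cast_nonneg n
    linarith
  set τ := FormalMultilinearSeries.ofScalars ℂ a with hτ
  have hτn : ∀ m : ℕ, ‖τ m‖ ≤ ‖σ m‖ := by
    intro m
    rw [hτ, FormalMultilinearSeries.ofScalars_norm, σ.norm_apply_eq_norm_coef]
    rw [ha]
    rw [norm_div]
    calc ‖σ.coeff m‖ / ‖((m : ℂ) + 3 / 2)‖ ≤ ‖σ.coeff m‖ / 1 :=
          div_le_div_of_nonneg_left (norm_nonneg _) one_pos (hdenabs m) |>.trans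
            (le_of_eq rfl)
      _ = ‖σ.coeff m‖ := by rw [div_one]
  have hrτ : r ≤ τ.radius := by
    refine ENNReal.le_of_forall_nnreal_lt ?_
    intro r' hr'
    apply τ.le_radius_of_summable_norm
    have hsum := σ.summable_norm_mul_pow (lt_of_lt_of_le hr' hσ.r_le)
    refine hsum.of_nonneg_of_le (fun m => by positivity) (fun m => ?_)
    exact mul_le_mul_of_nonneg_right (hτn m) (by positivity)
  have hτpos : 0 < τ.radius := lt_of_lt_of_le hσ.r_pos hrτ
  set q := τ.sum with hqdef
  have hq : HasFPowerSeriesOnBall q τ 0 r :=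
    (τ.hasFPowerSeriesOnBall hτpos).mono hσ.r_pos hrτ
  have hτcoeff : ∀ m : ℕ, (τ m fun _ => (1 : ℂ)) = a m := by
    intro m
    rw [hτ, FormalMultilinearSeries.ofScalars_apply_eq]
    simp
  refine ⟨q, hq.hasFPowerSeriesAt.analyticAt, ?_, ?_⟩
  · have h1 : q 0 = a 0 := by
      rw [← hq.coeff_zero fun _ => (1 : ℂ), hτcoeff 0]
    have h2 : s 0 = σ.coeff 0 := by
      have := hσ.coeff_zero fun _ => (1 : ℂ)
      rw [← this]; rfl
    rw [h1, h2, ha]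
    have := hden 0
    field_simp
    ring
  · have key : ∀ z ∈ EMetric.ball (0 : ℂ) r,
        (3 / 2 : ℂ) * q z + z * deriv q z = s z := by
      intro z hz
      have h1 : HasSum (fun m => a m * z ^ m) (q z) := by
        have := hq.hasSum hz
        simp only [zero_add] at this
        convert this using 2 with m
        · rfl
        rw [hτ, FormalMultilinearSeries.ofScalars_apply_eq, smul_eq_mul]
      have h2 : HasSum (fun m => σ.coeff m * z ^ m) (s z) := by
        have := hσ.hasSum hz
        simp only [zero_add] at this
        convert this using 2 with m
        · rfl
        rw [σ.apply_eq_pow_smul_coeff, smul_eq_mul, mul_comm]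
      have hd := hq.fderiv.hasSum hz
      have h3 : HasSum (fun m => (((m + 1 : ℕ) : ℂ)) * a (m + 1) * z ^ (m + 1))
          (z * deriv q z) := by
        have h4 := hd.mapL (ContinuousLinearMap.apply ℂ ℂ z)
        simp only [zero_add, ContinuousLinearMap.apply_apply] at h4
        have hval : (fderiv ℂ q z) z = z * deriv q z := by
          have hsm := (fderiv ℂ q z).map_smul z (1 : ℂ)
          simp only [smul_eq_mul, mul_one] at hsm
          rw [hsm, fderiv_apply_one_eq_deriv]
        rw [hval] at h4
        have hterm : ∀ b : ℕ, ((τ.derivSeries b) fun _ => z) z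
            = (((b + 1 : ℕ) : ℂ)) * a (b + 1) * z ^ (b + 1) := by
          intro b
          rw [τ.derivSeries_apply_diag, hτ, FormalMultilinearSeries.ofScalars_apply_eq,
            smul_eq_mul, nsmul_eq_mul]
          ring
        simp only [hterm] at h4
        exact h4
      have h5 : HasSum (fun k : ℕ => ((k : ℕ) : ℂ) * a k * z ^ k) (z * deriv q z) := by
        have h5' := (hasSum_nat_add_iff (f := fun k : ℕ => ((k : ℕ) : ℂ) * a k * z ^ k) 1).mp h3
        simpa using h5'
      have h6 := (h1.mul_left (3 / 2 : ℂ)).add h5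
      have h7 : (fun k : ℕ => (3 / 2 : ℂ) * (a k * z ^ k) + ((k : ℕ) : ℂ) * a k * z ^ k)
          = fun k : ℕ => σ.coeff k * z ^ k := by
        funext k
        have hcoeff : σ.coeff k = (((k : ℕ) : ℂ) + 3 / 2) * a k := by
          simp only [ha]
          rw [mul_comm]
          exact (div_mul_cancel₀ _ (hden k)).symm
        rw [hcoeff]; ring
      rw [h7] at h6
      exact h6.unique h2
    exact eventually_of_mem (EMetric.ball_mem_nhds 0 hσ.r_pos) key

/-- distinguished local parameter at a simple zero of a quadratic
differential.  If `φ` is analytic near `0` with a simple zero at `0`, then there is an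
analytic local coordinate `ζ` with `ζ 0 = 0`, `ζ' 0 ≠ 0`, such that
`φ z = (9/4) ζ(z) (ζ'(z))²` near `0`. -/
theorem exists_distinguished_local_parameter
    (φ : ℂ → ℂ) (hφ : AnalyticAt ℂ φ 0) (h0 : φ 0 = 0) (h1 : deriv φ 0 ≠ 0) :
    ∃ r : ℝ, 0 < r ∧ ∃ ζ : ℂ → ℂ,
      AnalyticOnNhd ℂ ζ (Metric.ball (0 : ℂ) r) ∧
      ζ 0 = 0 ∧ deriv ζ 0 ≠ 0 ∧
      ∀ z ∈ Metric.ball (0 : ℂ) r, φ z = (9 / 4 : ℂ) * ζ z * (deriv ζ z) ^ 2 := by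
  classical
  -- Step 1: `φ z = z * g z` with `g` analytic, `g 0 ≠ 0`.
  obtain ⟨p, hp⟩ := hφ
  set g : ℂ → ℂ := dslope φ 0 with hgdef
  have hg : AnalyticAt ℂ g 0 := hp.has_fpower_series_dslope_fslope.analyticAt
  have hg0 : g 0 = deriv φ 0 := dslope_same φ 0
  have hg0ne : g 0 ≠ 0 := by rw [hg0]; exact h1
  have hφg : ∀ z : ℂ, φ z = z * g z := by
    intro z
    by_cases hz : z = 0
    · simp [hz, h0]
    · rw [hgdef, dslope_of_ne φ hz, slope_def_field]
      field_simp [h0]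
      rw [h0]; ring
  -- Step 2: analytic square root `s` of `g`.
  obtain ⟨s, hs, hs0, hsg⟩ := exists_analytic_root 2 (by norm_num) g hg hg0ne
  -- Step 3: solve `(3/2) q + z q' = s`.
  obtain ⟨q, hqA, hq0, hqs⟩ := exists_analytic_ode_solution s hs
  have hq0ne : q 0 ≠ 0 := by
    rw [hq0]
    exact mul_ne_zero (by norm_num) hs0
  -- Step 4: analytic cube root `m` of `q`.
  obtain ⟨m, hmA, hm0, hmq⟩ := exists_analytic_root 3 (by norm_num) q hqA hq0ne
  -- Collect all eventual facts on one metric ball.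
  have hall : ∀ᶠ z in 𝓝 (0 : ℂ),
      (s z ^ 2 = g z ∧ m z ^ 3 = q z ∧ (3 / 2 : ℂ) * q z + z * deriv q z = s z)
        ∧ (AnalyticAt ℂ m z ∧ AnalyticAt ℂ q z) :=
    (hsg.and (hmq.and hqs)).and (hmA.eventually_analyticAt.and hqA.eventually_analyticAt)
  rw [Metric.eventually_nhds_iff_ball] at hall
  obtain ⟨r, hrpos, hball⟩ := hall
  have hsg' : ∀ z ∈ Metric.ball (0 : ℂ) r, s z ^ 2 = g z := fun z hz => (hball z hz).1.1
  have hmq' : ∀ z ∈ Metric.ball (0 : ℂ) r, m z ^ 3 = q z := fun z hz => (hball z hz).1.2.1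
  have hqs' : ∀ z ∈ Metric.ball (0 : ℂ) r,
      (3 / 2 : ℂ) * q z + z * deriv q z = s z := fun z hz => (hball z hz).1.2.2
  have hmA' : ∀ z ∈ Metric.ball (0 : ℂ) r, AnalyticAt ℂ m z := fun z hz => (hball z hz).2.1
  -- derivative relation `deriv q = 3 m² m'` on the ball
  have hderivq : ∀ z ∈ Metric.ball (0 : ℂ) r,
      deriv q z = 3 * m z ^ 2 * deriv m z := by
    intro z hz
    have hmem : Metric.ball (0 : ℂ) r ∈ 𝓝 z :=
      (Metric.isOpen_ball).mem_nhds hz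
    have heq : (fun w => m w ^ 3) =ᶠ[𝓝 z] q :=
      eventually_of_mem hmem (fun w hw => hmq' w hw)
    rw [← heq.deriv_eq]
    rw [deriv_fun_pow ((hmA' z hz).differentiableAt)]
    norm_num
  -- the distinguished parameter
  refine ⟨r, hrpos, fun w => w * m w ^ 2, ?_, by simp, ?_, ?_⟩
  · intro z hz
    exact (analyticAt_id.mul ((hmA' z hz).pow 2))
  · have hz0 : (0 : ℂ) ∈ Metric.ball (0 : ℂ) r := by simp [hrpos]
    have hd : deriv (fun w => w * m w ^ 2) 0 = m 0 ^ 2 := by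
      rw [deriv_fun_mul differentiableAt_fun_id ((hmA' 0 hz0).differentiableAt.fun_pow 2)]
      simp
    rw [hd]
    exact pow_ne_zero 2 hm0
  · intro z hz
    have hdz : deriv (fun w => w * m w ^ 2) z = m z ^ 2 + z * (2 * m z * deriv m z) := by
      rw [deriv_fun_mul differentiableAt_fun_id ((hmA' z hz).differentiableAt.fun_pow 2)]
      rw [deriv_fun_pow ((hmA' z hz).differentiableAt)]
      norm_num
    rw [hdz, hφg z, ← hsg' z hz, ← hqs' z hz, hderivq z hz, ← hmq' z hz]
    ring
end

section
/- For complex coefficients a = (a₁,…,a₆) and b = (b₁,…,b₆), define u, v : ℂ∖{0} → ℂ by u(z) = a₁ log|z| + a₂/z + a₃/conj(z) + a₄ + a₅ z + a₆ conj(z) and v(z) = b₁ log|z| + b₂/z + b₃/conj(z) + b₄ + b₅ z + b₆ conj(z). Let ∂_r u(r e^{iθ}) denote the derivative of r ↦ u(r e^{iθ}). Then the limit as ε → 0⁺ of ∫₀^{2π} [ u(ε e^{iθ}) · ∂_r v(ε e^{iθ}) − v(ε e^{iθ}) · ∂_r u(ε e^{iθ}) ] ε dθ exists and equals 2π(a₄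 b₁ − a₁ b₄) + 4π(a₂ b₅ − a₅ b₂) + 4π(a₃ b₆ − a₆ b₃). -/
open scoped Real ComplexConjugate

/-- The model singular function `a₁ log|z| + a₂/z + a₃/z̄ + a₄ + a₅ z + a₆ z̄`
(coefficients indexed by `Fin 6`). -/
noncomputable def modelAsympt (a : Fin 6 → ℂ) (z : ℂ) : ℂ :=
  a 0 * (Real.log ‖z‖ : ℂ) + a 1 / z + a 2 / conj z + a 3 + a 4 * z + a 5 * conj z

/-- The radial derivative at radius `ε` in direction `θ` of a function `f : ℂ → ℂ`:
the derivative of `r ↦ f (r e^{iθ})` at `r = ε`. -/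
noncomputable def radialDeriv (f : ℂ → ℂ) (θ ε : ℝ) : ℂ :=
  deriv (fun r : ℝ => f ((r : ℂ) * Complex.exp (Complex.I * θ))) ε

/-! ### Auxiliary lemmas -/

private lemma conj_expI (θ : ℝ) :
    conj (Complex.exp (Complex.I * θ)) = (Complex.exp (Complex.I * θ))⁻¹ := by
  rw [← Complex.exp_conj, map_mul, Complex.conj_I, Complex.conj_ofReal, neg_mul,
    Complex.exp_neg]

private lemma abs_expI (θ : ℝ) : ‖Complex.exp (Complex.I * θ)‖ = 1 := by
  rw [Complex.norm_exp]
  simp [Complex.mul_re]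

/-- Value of the model function on the circle of radius `ε`, as a single fraction. -/
private lemma model_value (a : Fin 6 → ℂ) {ε : ℝ} (hε : 0 < ε) (θ : ℝ) :
    modelAsympt a ((ε : ℂ) * Complex.exp (Complex.I * θ)) =
      (a 0 * (Real.log ε : ℂ) * Complex.exp (Complex.I * θ) * (ε : ℂ)
        + a 1 + a 2 * Complex.exp (Complex.I * θ) ^ 2
        + a 3 * Complex.exp (Complex.I * θ) * (ε : ℂ)
        + a 4 * Complex.exp (Complex.I * θ) ^ 2 * (ε : ℂ) ^ 2
        + a 5 * (ε : ℂ) ^ 2) / (Complex.exp (Complex.I * θ) * (ε : ℂ)) := by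
  have hE : Complex.exp (Complex.I * θ) ≠ 0 := Complex.exp_ne_zero _
  have hc : (ε : ℂ) ≠ 0 := Complex.ofReal_ne_zero.2 hε.ne'
  have habs : ‖(ε : ℂ) * Complex.exp (Complex.I * θ)‖ = ε := by
    rw [norm_mul, abs_expI, Complex.norm_real, Real.norm_eq_abs, abs_of_pos hε, mul_one]
  have hconj : conj ((ε : ℂ) * Complex.exp (Complex.I * θ))
      = (ε : ℂ) * (Complex.exp (Complex.I * θ))⁻¹ := by
    rw [map_mul, Complex.conj_ofReal, conj_expI]
  rw [modelAsympt, habs, hconj]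
  field_simp

/-- The radial derivative of the model function. -/
private lemma radial_model (a : Fin 6 → ℂ) (θ : ℝ) {ε : ℝ} (hε : ε ≠ 0) :
    radialDeriv (modelAsympt a) θ ε =
      (a 0 * Complex.exp (Complex.I * θ) * (ε : ℂ)
        - a 1 - a 2 * Complex.exp (Complex.I * θ) ^ 2
        + a 4 * Complex.exp (Complex.I * θ) ^ 2 * (ε : ℂ) ^ 2
        + a 5 * (ε : ℂ) ^ 2) / (Complex.exp (Complex.I * θ) * (ε : ℂ) ^ 2) := by
  set E : ℂ := Complex.exp (Complex.I * θ) with hEdef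
  have hE : E ≠ 0 := Complex.exp_ne_zero _
  have hc : (ε : ℂ) ≠ 0 := Complex.ofReal_ne_zero.2 hε
  -- rewrite the function `r ↦ modelAsympt a (r E)` in a differentiable form
  have hfun : (fun r : ℝ => modelAsympt a ((r : ℂ) * E)) =
      fun r : ℝ => a 0 * (Real.log r : ℂ)
        + (a 1 * E⁻¹ + a 2 * E) * ((r : ℂ))⁻¹ + a 3 + (a 4 * E + a 5 * E⁻¹) * (r : ℂ) := by
    funext r
    have habs : ‖(r : ℂ) * E‖ = |r| := by
      rw [norm_mul, hEdef, abs_expI, Complex.norm_real, Real.norm_eq_abs, mul_one]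
    have hconj : conj ((r : ℂ) * E) = (r : ℂ) * E⁻¹ := by
      rw [map_mul, Complex.conj_ofReal, hEdef, conj_expI]
    rw [modelAsympt, habs, hconj, Real.log_abs]
    rcases eq_or_ne r 0 with h | h
    · subst h; simp
    · have hrc : (r : ℂ) ≠ 0 := Complex.ofReal_ne_zero.2 h
      field_simp
      ring
  have h0 : HasDerivAt (fun r : ℝ => ((Real.log r : ℝ) : ℂ)) ((ε⁻¹ : ℝ) : ℂ) ε :=
    (Real.hasDerivAt_log hε).ofReal_comp
  have hinv : HasDerivAt (fun r : ℝ => ((r : ℂ))⁻¹) (-(((ε : ℂ)) ^ 2)⁻¹) ε :=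
    (hasDerivAt_inv hc).comp_ofReal
  have hid : HasDerivAt (fun r : ℝ => ((r : ℂ))) 1 ε := (hasDerivAt_id ((ε : ℝ) : ℂ)).comp_ofReal
  have hg : HasDerivAt
      (fun r : ℝ => a 0 * (Real.log r : ℂ)
        + (a 1 * E⁻¹ + a 2 * E) * ((r : ℂ))⁻¹ + a 3 + (a 4 * E + a 5 * E⁻¹) * (r : ℂ))
      (a 0 * ((ε⁻¹ : ℝ) : ℂ) + (a 1 * E⁻¹ + a 2 * E) * (-(((ε : ℂ)) ^ 2)⁻¹)
        + (a 4 * E + a 5 * E⁻¹) * 1) ε := by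
    exact (((h0.const_mul (a 0)).add (hinv.const_mul (a 1 * E⁻¹ + a 2 * E))).add_const
      (a 3)).add (hid.const_mul (a 4 * E + a 5 * E⁻¹))
  rw [radialDeriv, hfun, hg.deriv]
  push_cast
  field_simp
  ring

/-- Integral of `C e^{k i θ}` over a full period vanishes for `k ≠ 0`. -/
private lemma integral_mul_exp (C : ℂ) (k : ℤ) (hk : k ≠ 0) :
    ∫ θ in (0 : ℝ)..(2 * π), C * Complex.exp ((k : ℂ) * Complex.I * θ) = 0 := by
  rw [intervalIntegral.integral_const_mul,
    integral_exp_mul_complex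
      (mul_ne_zero (Int.cast_ne_zero.2 hk) Complex.I_ne_zero)]
  rw [show ((k : ℂ) * Complex.I * ((2 : ℝ) * π : ℝ)) = (k : ℂ) * (2 * π * Complex.I) by
      push_cast; ring,
    Complex.exp_int_mul_two_pi_mul_I]
  simp

/-- Fourier coefficients of the Green integrand. -/
noncomputable def greenC1 (a b : Fin 6 → ℂ) (ε : ℝ) : ℂ :=
  (a 0 * (Real.log ε : ℂ) + a 3) * (-(b 2) / (ε : ℂ) + b 4 * ε)
    + a 2 * b 0 / (ε : ℂ) + a 4 * b 0 * ε
    - ((b 0 * (Real.log ε : ℂ) + b 3) * (-(a 2) / (ε : ℂ) + a 4 * ε)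
    + b 2 * a 0 / (ε : ℂ) + b 4 * a 0 * ε)

noncomputable def greenCm1 (a b : Fin 6 → ℂ) (ε : ℝ) : ℂ :=
  (a 0 * (Real.log ε : ℂ) + a 3) * (-(b 1) / (ε : ℂ) + b 5 * ε)
    + a 1 * b 0 / (ε : ℂ) + a 5 * b 0 * ε
    - ((b 0 * (Real.log ε : ℂ) + b 3) * (-(a 1) / (ε : ℂ) + a 5 * ε)
    + b 1 * a 0 / (ε : ℂ) + b 5 * a 0 * ε)

set_option maxHeartbeats 1600000 in
/-- Pointwise Fourier decomposition of the Green integrand on the circle of radius `ε`. -/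
private lemma integrand_eq (a b : Fin 6 → ℂ) {ε : ℝ} (hε : 0 < ε) (θ : ℝ) :
    (modelAsympt a ((ε : ℂ) * Complex.exp (Complex.I * θ)) * radialDeriv (modelAsympt b) θ ε
      - modelAsympt b ((ε : ℂ) * Complex.exp (Complex.I * θ))
          * radialDeriv (modelAsympt a) θ ε) * (ε : ℂ)
    = ((a 3 * b 0 - a 0 * b 3) + 2 * (a 1 * b 4 - a 4 * b 1) + 2 * (a 2 * b 5 - a 5 * b 2))
      + greenC1 a b ε * Complex.exp (((1 : ℤ) : ℂ) * Complex.I * θ)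
      + greenCm1 a b ε * Complex.exp (((-1 : ℤ) : ℂ) * Complex.I * θ)
      + (2 * (a 2 * b 4 - a 4 * b 2)) * Complex.exp (((2 : ℤ) : ℂ) * Complex.I * θ)
      + (2 * (a 1 * b 5 - a 5 * b 1)) * Complex.exp (((-2 : ℤ) : ℂ) * Complex.I * θ) := by
  have hE : Complex.exp (Complex.I * θ) ≠ 0 := Complex.exp_ne_zero _
  have hc : (ε : ℂ) ≠ 0 := Complex.ofReal_ne_zero.2 hε.ne'
  have e1 : Complex.exp (((1 : ℤ) : ℂ) * Complex.I * θ) = Complex.exp (Complex.I * θ) := by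
    norm_num
  have em1 : Complex.exp (((-1 : ℤ) : ℂ) * Complex.I * θ)
      = (Complex.exp (Complex.I * θ))⁻¹ := by
    rw [show ((-1 : ℤ) : ℂ) * Complex.I * θ = -(Complex.I * θ) by push_cast; ring,
      Complex.exp_neg]
  have e2 : Complex.exp (((2 : ℤ) : ℂ) * Complex.I * θ)
      = Complex.exp (Complex.I * θ) ^ 2 := by
    rw [show ((2 : ℤ) : ℂ) * Complex.I * θ = ((2 : ℕ) : ℂ) * (Complex.I * θ) by
        push_cast; ring, Complex.exp_nat_mul]
  have em2 : Complex.exp (((-2 : ℤ) : ℂ) * Complex.I * θ)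
      = ((Complex.exp (Complex.I * θ)) ^ 2)⁻¹ := by
    rw [show ((-2 : ℤ) : ℂ) * Complex.I * θ = -(((2 : ℕ) : ℂ) * (Complex.I * θ)) by
        push_cast; ring, Complex.exp_neg, Complex.exp_nat_mul]
  rw [model_value a hε θ, model_value b hε θ, radial_model a θ hε.ne', radial_model b θ hε.ne',
    e1, em1, e2, em2, greenC1, greenCm1]
  field_simp
  ring

private lemma cont_mul_exp (C k : ℂ) : Continuous fun θ : ℝ => C * Complex.exp (k * θ) :=
  continuous_const.mul (Complex.continuous_exp.comp (continuous_const.mul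
    Complex.continuous_ofReal))

/-- The boundary integral is independent of the radius `ε > 0`. -/
private lemma integral_value (a b : Fin 6 → ℂ) {ε : ℝ} (hε : 0 < ε) :
    (∫ θ in (0 : ℝ)..(2 * π),
        (modelAsympt a ((ε : ℂ) * Complex.exp (Complex.I * θ)) * radialDeriv (modelAsympt b) θ ε
          - modelAsympt b ((ε : ℂ) * Complex.exp (Complex.I * θ))
              * radialDeriv (modelAsympt a) θ ε) * (ε : ℂ))
    = 2 * (π : ℂ) * (a 3 * b 0 - a 0 * b 3)
        + 4 * (π : ℂ) * (a 1 * b 4 - a 4 * b 1)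
        + 4 * (π : ℂ) * (a 2 * b 5 - a 5 * b 2) := by
  rw [intervalIntegral.integral_congr (fun θ _ => integrand_eq a b hε θ)]
  have h0 : IntervalIntegrable
      (fun _ : ℝ => ((a 3 * b 0 - a 0 * b 3) + 2 * (a 1 * b 4 - a 4 * b 1)
        + 2 * (a 2 * b 5 - a 5 * b 2) : ℂ)) MeasureTheory.volume 0 (2 * π) :=
    intervalIntegrable_const
  have h1 : IntervalIntegrable
      (fun θ : ℝ => greenC1 a b ε * Complex.exp (((1 : ℤ) : ℂ) * Complex.I * θ))
      MeasureTheory.volume 0 (2 * π) :=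
    (cont_mul_exp _ _).intervalIntegrable _ _
  have hm1 : IntervalIntegrable
      (fun θ : ℝ => greenCm1 a b ε * Complex.exp (((-1 : ℤ) : ℂ) * Complex.I * θ))
      MeasureTheory.volume 0 (2 * π) :=
    (cont_mul_exp _ _).intervalIntegrable _ _
  have h2 : IntervalIntegrable
      (fun θ : ℝ => (2 * (a 2 * b 4 - a 4 * b 2)) * Complex.exp (((2 : ℤ) : ℂ) * Complex.I * θ))
      MeasureTheory.volume 0 (2 * π) :=
    (cont_mul_exp _ _).intervalIntegrable _ _
  have hm2 : IntervalIntegrable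
      (fun θ : ℝ => (2 * (a 1 * b 5 - a 5 * b 1)) * Complex.exp (((-2 : ℤ) : ℂ) * Complex.I * θ))
      MeasureTheory.volume 0 (2 * π) :=
    (cont_mul_exp _ _).intervalIntegrable _ _
  rw [intervalIntegral.integral_add (((h0.add h1).add hm1).add h2) hm2,
    intervalIntegral.integral_add ((h0.add h1).add hm1) h2,
    intervalIntegral.integral_add (h0.add h1) hm1,
    intervalIntegral.integral_add h0 h1,
    integral_mul_exp _ 1 one_ne_zero, integral_mul_exp _ (-1) (by norm_num),
    integral_mul_exp _ 2 two_ne_zero, integral_mul_exp _ (-2) (by norm_num),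
    intervalIntegral.integral_const]
  have hπ : Real.pi ≠ 0 := Real.pi_ne_zero
  simp only [sub_zero, add_zero]
  rw [Complex.real_smul]
  push_cast
  ring

/-- Green-identity boundary computation at a conical point.  With
`u = modelAsympt a` and `v = modelAsympt b`, the limit as `ε → 0⁺` of
`∫₀^{2π} (u ∂_r v − v ∂_r u)(ε e^{iθ}) ε dθ` exists and equals
`2π(a₄b₁ − a₁b₄) + 4π(a₂b₅ − a₅b₂) + 4π(a₃b₆ − a₆b₃)`. -/
theorem green_identity_conical_point (a b : Fin 6 → ℂ) :
    Filter.Tendsto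
      (fun ε : ℝ => ∫ θ in (0:ℝ)..(2 * π),
        (modelAsympt a ((ε : ℂ) * Complex.exp (Complex.I * θ)) * radialDeriv (modelAsympt b) θ ε
          - modelAsympt b ((ε : ℂ) * Complex.exp (Complex.I * θ))
              * radialDeriv (modelAsympt a) θ ε) * (ε : ℂ))
      (nhdsWithin 0 (Set.Ioi 0))
      (nhds (2 * (π : ℂ) * (a 3 * b 0 - a 0 * b 3)
        + 4 * (π : ℂ) * (a 1 * b 4 - a 4 * b 1)
        + 4 * (π : ℂ) * (a 2 * b 5 - a 5 * b 2))) := by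
  apply Filter.Tendsto.congr' _ tendsto_const_nhds
  filter_upwards [self_mem_nhdsWithin] with ε (hε : ε ∈ Set.Ioi (0 : ℝ))
  exact (integral_value a b hε).symm
end
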